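/- Let (A, μ, α) be a W*-dynamical system where the dynamics is the modular group itself (G = ℝ, α_t = σ^μ_t). If the system is ergodic (fixed point algebra of σ^μ is ℂ1), then it is weakly mixing: the closed span H₀ of eigenvectors of the implementing unitary group on the GNS space is one-dimensional, H₀ = ℂΩ_μ. -/

import Mathlib

noncomputable section

local notation "⟪" x ", " y "⟫" => @inner ℂ _ _ x y

/-- Conjugation of a bounded operator by a unitary (surjective linear isometry). -/
def conjAct {H : Type*} [NormedAddCommGroup H] [InnerProductSpace ℂ H]
    (u : H ≃ₗᵢ[ℂ] H) (a : H →L[ℂ] H) : H →L[ℂ] H :=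
  u.toLinearIsometry.toContinuousLinearMap ∘L a ∘L
    u.symm.toLinearIsometry.toContinuousLinearMap

/-- The μ-KMS condition for a one-parameter group `σ` with respect to the vector
state a ↦ ⟨Ω, aΩ⟩ of `M`; this characterizes the modular automorphism group. -/
def IsKMS {H : Type*} [NormedAddCommGroup H] [InnerProductSpace ℂ H] [CompleteSpace H]
    (M : VonNeumannAlgebra H) (Ω : H)
    (σ : ℝ → (H →L[ℂ] H) → (H →L[ℂ] H)) : Prop :=
  ∀ a ∈ M, ∀ b ∈ M, ∃ F : ℂ → ℂ,
    (∃ C : ℝ, ∀ z : ℂ, 0 ≤ z.im → z.im ≤ 1 → ‖F z‖ ≤ C) ∧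
    ContinuousOn F {z : ℂ | 0 ≤ z.im ∧ z.im ≤ 1} ∧
    DifferentiableOn ℂ F {z : ℂ | 0 < z.im ∧ z.im < 1} ∧
    (∀ t : ℝ, F t = ⟪Ω, ((σ t a) ∘L b) Ω⟫) ∧
    (∀ t : ℝ, F (t + Complex.I) = ⟪Ω, (b ∘L (σ t a)) Ω⟫)

set_option linter.unusedSectionVars false

open Complex MeasureTheory intervalIntegral Filter Topology Set

section Aux



lemma char_exists {χ : ℝ → ℂ} (hcont : Continuous χ) (h0 : χ 0 = 1)
    (hmul : ∀ u v : ℝ, χ (u + v) = χ u * χ v) (habs : ∀ t, ‖χ t‖ = 1) :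
    ∃ s : ℝ, ∀ t : ℝ, χ t = Complex.exp (Complex.I * s * t) := by
  -- find δ with Re χ ≥ 1/2 on [0, δ]
  obtain ⟨δ, hδpos, hδ⟩ : ∃ δ : ℝ, 0 < δ ∧ ∀ u ∈ Set.Icc (0:ℝ) δ, (1/2 : ℝ) ≤ (χ u).re := by
    have h1 : ContinuousAt χ 0 := hcont.continuousAt
    rw [Metric.continuousAt_iff] at h1
    obtain ⟨ε, hεpos, hε⟩ := h1 (1/2) (by norm_num)
    refine ⟨ε/2, by positivity, fun u hu => ?_⟩
    have hd : dist u 0 < ε := by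
      rw [Real.dist_eq, sub_zero]
      rw [_root_.abs_of_nonneg hu.1]
      linarith [hu.2]
    have := hε hd
    rw [h0] at this
    have h2 : |(χ u - 1).re| ≤ ‖χ u - 1‖ := Complex.abs_re_le_norm _
    have h3 : dist (χ u) 1 = ‖χ u - 1‖ := by
      rw [Complex.dist_eq]
    rw [h3] at this
    have h4 : (χ u - 1).re = (χ u).re - 1 := by simp
    rw [h4] at h2
    have := abs_le.mp (le_trans h2 this.le)
    linarith [this.1]
  set c : ℂ := ∫ u in (0:ℝ)..δ, χ u with hc
  have hcne : c ≠ 0 := by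
    intro h
    have hre : c.re = ∫ u in (0:ℝ)..δ, (χ u).re := by
      rw [hc]
      exact (Complex.reCLM.intervalIntegral_comp_comm (hcont.intervalIntegrable _ _)).symm
    have hmono : (∫ u in (0:ℝ)..δ, (1/2 : ℝ)) ≤ ∫ u in (0:ℝ)..δ, (χ u).re := by
      apply intervalIntegral.integral_mono_on hδpos.le
      · exact intervalIntegrable_const
      · exact (Complex.continuous_re.comp hcont).intervalIntegrable _ _
      · exact hδ
    rw [intervalIntegral.integral_const] at hmono
    simp only [smul_eq_mul, sub_zero] at hmono
    rw [h] at hre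
    simp at hre
    rw [← hre] at hmono
    nlinarith
  -- antiderivative
  set G : ℝ → ℂ := fun t => ∫ u in (0:ℝ)..t, χ u with hG
  have hGderiv : ∀ t : ℝ, HasDerivAt G (χ t) t := by
    intro t
    exact (intervalIntegral.integral_hasStrictDerivAt_right
      (hcont.intervalIntegrable _ _)
      (hcont.stronglyMeasurable.stronglyMeasurableAtFilter)
      hcont.continuousAt).hasDerivAt
  -- χ t = (G (t+δ) - G t) / c
  have hrep : ∀ t : ℝ, χ t * c = G (t + δ) - G t := by
    intro t
    have h1 : (∫ u in (0:ℝ)..δ, χ (u + t)) = ∫ u in (0:ℝ)+t..δ+t, χ u :=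
      intervalIntegral.integral_comp_add_right χ t
    have h2 : (∫ u in (0:ℝ)..δ, χ (u + t)) = χ t * c := by
      rw [hc, ← intervalIntegral.integral_const_mul]
      congr 1
      ext u
      rw [add_comm u t, hmul]
    have h3 : G (t + δ) - G t = ∫ u in t..t+δ, χ u := by
      rw [hG]
      exact intervalIntegral.integral_interval_sub_left
        (hcont.intervalIntegrable _ _) (hcont.intervalIntegrable _ _)
    rw [h3, ← h2, h1]
    norm_num [add_comm]
  have hχdiff : ∀ t : ℝ, HasDerivAt χ ((χ (t + δ) - χ t) / c) t := by
    intro t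
    have h1 : HasDerivAt (fun t => (G (t + δ) - G t) / c) ((χ (t + δ) - χ t) / c) t := by
      have hshift : HasDerivAt (fun t : ℝ => G (t + δ)) (χ (t + δ)) t := by
        have h0' : HasDerivAt (fun u : ℝ => u + δ) 1 t := by
          simpa using (hasDerivAt_id t).add_const δ
        have := HasDerivAt.scomp t (hGderiv (t + δ)) h0'
        simpa [Function.comp_def] using this
      exact ((hshift.sub (hGderiv t)).div_const c)
    have h2 : (fun t : ℝ => (G (t + δ) - G t) / c) = χ := by
      funext t
      rw [← hrep t, mul_div_assoc, div_self hcne, mul_one]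
    rwa [h2] at h1
  set k : ℂ := (χ (0 + δ) - χ 0) / c with hk
  have hk0 : HasDerivAt χ k 0 := hχdiff 0
  have hχk : ∀ t : ℝ, HasDerivAt χ (χ t * k) t := by
    intro t
    have h1 : HasDerivAt (fun h : ℝ => χ t * χ h) (χ t * k) 0 := hk0.const_mul (χ t)
    have h2 : (fun h : ℝ => χ t * χ h) = fun h : ℝ => χ (t + h) := by
      funext h; rw [hmul]
    rw [h2] at h1
    have h0' : HasDerivAt (fun u : ℝ => u - t) 1 t := by
      simpa using (hasDerivAt_id t).sub_const t
    have h1' : HasDerivAt (fun h : ℝ => χ (t + h)) (χ t * k) (t - t) := by rwa [sub_self]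
    have h3 := HasDerivAt.scomp (h := fun u : ℝ => u - t) t h1' h0'
    have h4 : ((fun h : ℝ => χ (t + h)) ∘ fun u : ℝ => u - t) = χ := by
      funext u; simp only [Function.comp]; congr 1; ring
    rw [h4] at h3
    simpa using h3
  -- χ t = exp (k t)
  have hform : ∀ t : ℝ, χ t = Complex.exp (k * t) := by
    intro t
    set N : ℝ → ℂ := fun t => χ t * Complex.exp (-(k * t)) with hN
    have hNd : ∀ u : ℝ, HasDerivAt N 0 u := by
      intro u
      have he : HasDerivAt (fun u : ℝ => Complex.exp (-(k * u))) (-k * Complex.exp (-(k * u))) u := by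
        have h1 : HasDerivAt (fun z : ℂ => Complex.exp (-(k * z))) (-k * Complex.exp (-(k * u))) (u : ℂ) := by
          have := (Complex.hasDerivAt_exp (-(k * u))).comp (u : ℂ)
            (((hasDerivAt_id (u : ℂ)).const_mul k).neg)
          simpa [mul_comm, Function.comp_def] using this
        exact h1.comp_ofReal
      have := (hχk u).mul he
      have h' : HasDerivAt N (χ u * k * Complex.exp (-(k * (u:ℂ))) + χ u * (-k * Complex.exp (-(k * (u:ℂ))))) u := this
      convert h' using 1
      ring
    have hNconst : N t = N 0 := by
      have : ∀ u : ℝ, deriv N u = 0 := fun u => (hNd u).deriv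
      have hdiff : Differentiable ℝ N := fun u => (hNd u).differentiableAt
      exact is_const_of_deriv_eq_zero hdiff this t 0
    rw [hN] at hNconst
    simp only [h0, Complex.ofReal_zero, mul_zero, neg_zero, Complex.exp_zero, mul_one, one_mul] at hNconst
    have := congrArg (· * Complex.exp (k * t)) hNconst
    simp only [one_mul] at this
    rw [mul_assoc, ← Complex.exp_add, neg_add_cancel, Complex.exp_zero, mul_one] at this
    exact this
  -- Re k = 0
  have hre : k.re = 0 := by
    have h1 : ‖χ 1‖ = 1 := habs 1
    rw [hform 1] at h1
    rw [Complex.norm_exp] at h1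
    have : (k * (1:ℝ)).re = k.re := by simp
    rw [this] at h1
    have h2 : Real.exp k.re = Real.exp 0 := by simp [h1]
    exact Real.exp_injective h2
  refine ⟨k.im, fun t => ?_⟩
  rw [hform t]
  congr 1
  have : k = Complex.I * k.im := by
    apply Complex.ext <;> simp [hre]
  rw [← this]



def UF : Ultrafilter ℕ := Ultrafilter.of Filter.atTop

lemma UF_le_atTop : (UF : Filter ℕ) ≤ Filter.atTop := Ultrafilter.of_le _

lemma exists_ulim (c : ℕ → ℂ) (R : ℝ) (hb : ∀ n, ‖c n‖ ≤ R) :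
    ∃ L : ℂ, Filter.Tendsto c (UF : Filter ℕ) (𝓝 L) := by
  have hcomp : IsCompact (Metric.closedBall (0:ℂ) R) := isCompact_closedBall _ _
  have hle : (UF.map c : Filter ℂ) ≤ Filter.principal (Metric.closedBall 0 R) := by
    rw [Filter.le_principal_iff]
    have : ∀ n, c n ∈ Metric.closedBall (0:ℂ) R := by
      intro n; rw [Metric.mem_closedBall, dist_zero_right]; exact hb n
    exact Filter.mem_map.mpr (Filter.univ_mem' this)
  obtain ⟨L, _, hL⟩ := hcomp.ultrafilter_le_nhds (UF.map c) hle
  exact ⟨L, hL⟩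

variable {H : Type*} [NormedAddCommGroup H] [InnerProductSpace ℂ H] [CompleteSpace H]

lemma exists_wot_limit (a : ℕ → H →L[ℂ] H) (C : ℝ) (hb : ∀ n, ‖a n‖ ≤ C) :
    ∃ m : H →L[ℂ] H, ‖m‖ ≤ C ∧
      ∀ ξ η : H, Filter.Tendsto (fun n => ⟪ξ, (a n) η⟫) (UF : Filter ℕ) (𝓝 ⟪ξ, m η⟫) := by
  have hC : 0 ≤ C := le_trans (norm_nonneg _) (hb 0)
  have hbnd : ∀ (ξ η : H) (n : ℕ), ‖⟪ξ, (a n) η⟫‖ ≤ ‖ξ‖ * (C * ‖η‖) := by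
    intro ξ η n
    calc ‖⟪ξ, (a n) η⟫‖ ≤ ‖ξ‖ * ‖(a n) η‖ := norm_inner_le_norm _ _
    _ ≤ ‖ξ‖ * (C * ‖η‖) := by
        have h1 : ‖(a n) η‖ ≤ ‖a n‖ * ‖η‖ := (a n).le_opNorm η
        have h2 : ‖a n‖ * ‖η‖ ≤ C * ‖η‖ := mul_le_mul_of_nonneg_right (hb n) (norm_nonneg _)
        exact mul_le_mul_of_nonneg_left (h1.trans h2) (norm_nonneg _)
  have hex : ∀ ξ η : H, ∃ L : ℂ, Filter.Tendsto (fun n => ⟪ξ, (a n) η⟫) (UF : Filter ℕ) (𝓝 L) :=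
    fun ξ η => exists_ulim _ (‖ξ‖ * (C * ‖η‖)) (hbnd ξ η)
  choose L hL using hex
  have huniq : ∀ {ξ η : H} {z : ℂ},
      Filter.Tendsto (fun n => ⟪ξ, (a n) η⟫) (UF : Filter ℕ) (𝓝 z) → L ξ η = z := by
    intro ξ η z hz
    exact tendsto_nhds_unique (hL ξ η) hz
  have Lbound : ∀ ξ η : H, ‖L ξ η‖ ≤ ‖ξ‖ * (C * ‖η‖) := by
    intro ξ η
    exact le_of_tendsto ((hL ξ η).norm) (Filter.Eventually.of_forall (hbnd ξ η))
  have Ladd_left : ∀ ξ ξ' η : H, L (ξ + ξ') η = L ξ η + L ξ' η := by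
    intro ξ ξ' η
    refine huniq ?_
    have := (hL ξ η).add (hL ξ' η)
    simpa [inner_add_left] using this
  have Lsmul_left : ∀ (r : ℂ) (ξ η : H), L (r • ξ) η = (starRingEnd ℂ) r * L ξ η := by
    intro r ξ η
    refine huniq ?_
    have := (hL ξ η).const_mul ((starRingEnd ℂ) r)
    simpa [inner_smul_left, mul_comm] using this
  have Ladd_right : ∀ ξ η η' : H, L ξ (η + η') = L ξ η + L ξ η' := by
    intro ξ η η'
    refine huniq ?_
    have := (hL ξ η).add (hL ξ η')
    simpa [inner_add_right] using this
  have Lsmul_right : ∀ (r : ℂ) (ξ η : H), L ξ (r • η) = r * L ξ η := by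
    intro r ξ η
    refine huniq ?_
    have := (hL ξ η).const_mul r
    simpa [inner_smul_right] using this
  -- functional for fixed η
  have hφ : ∀ η : H, ∃ w : H, ∀ ξ : H, ⟪ξ, w⟫ = L ξ η := by
    intro η
    set φlin : H →ₗ[ℂ] ℂ :=
      { toFun := fun ξ => (starRingEnd ℂ) (L ξ η)
        map_add' := by intro ξ ξ'; simp [Ladd_left]
        map_smul' := by intro r ξ; simp [Lsmul_left] } with hφlin
    set φ : H →L[ℂ] ℂ := LinearMap.mkContinuous φlin (C * ‖η‖) (by
      intro ξ
      simp only [hφlin, LinearMap.coe_mk, AddHom.coe_mk]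
      rw [RCLike.norm_conj]
      calc ‖L ξ η‖ ≤ ‖ξ‖ * (C * ‖η‖) := Lbound ξ η
      _ = C * ‖η‖ * ‖ξ‖ := by ring) with hφdef
    refine ⟨(InnerProductSpace.toDual ℂ H).symm φ, fun ξ => ?_⟩
    have h1 : ⟪(InnerProductSpace.toDual ℂ H).symm φ, ξ⟫ = φ ξ := by
      rw [← InnerProductSpace.toDual_apply_apply]
      simp
    have h2 : φ ξ = (starRingEnd ℂ) (L ξ η) := rfl
    calc ⟪ξ, (InnerProductSpace.toDual ℂ H).symm φ⟫
        = (starRingEnd ℂ) ⟪(InnerProductSpace.toDual ℂ H).symm φ, ξ⟫ := (inner_conj_symm _ _).symm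
      _ = (starRingEnd ℂ) ((starRingEnd ℂ) (L ξ η)) := by rw [h1, h2]
      _ = L ξ η := by simp
  choose w hw using hφ
  have hwbound : ∀ η : H, ‖w η‖ ≤ C * ‖η‖ := by
    intro η
    rcases eq_or_ne (w η) 0 with h | h
    · rw [h, norm_zero]; positivity
    · have h1 : ⟪w η, w η⟫ = L (w η) η := hw η (w η)
      have h2 : ‖⟪w η, w η⟫‖ = ‖w η‖ * ‖w η‖ := by
        rw [@inner_self_eq_norm_sq_to_K ℂ]
        rw [norm_pow]
        simp [sq]
      have h3 : ‖w η‖ * ‖w η‖ ≤ ‖w η‖ * (C * ‖η‖) := by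
        rw [← h2, h1]; exact Lbound _ _
      have h4 : 0 < ‖w η‖ := norm_pos_iff.mpr h
      exact le_of_mul_le_mul_left (by linarith) h4
  set mlin : H →ₗ[ℂ] H :=
    { toFun := w
      map_add' := by
        intro η η'
        apply ext_inner_left ℂ
        intro ξ
        rw [hw, inner_add_right, hw, hw, Ladd_right]
      map_smul' := by
        intro r η
        apply ext_inner_left ℂ
        intro ξ
        rw [hw, RingHom.id_apply, inner_smul_right, hw, Lsmul_right] } with hmlin
  refine ⟨LinearMap.mkContinuous mlin C (fun η => by exact hwbound η),
    LinearMap.mkContinuous_norm_le _ hC _, fun ξ η => ?_⟩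
  have : ⟪ξ, (LinearMap.mkContinuous mlin C (fun η => by exact hwbound η)) η⟫ = L ξ η := hw η ξ
  rw [this]
  exact hL ξ η



lemma strip_rigidity {F : ℂ → ℂ} {C : ℝ}
    (hb : ∀ z : ℂ, 0 ≤ z.im → z.im ≤ 1 → ‖F z‖ ≤ C)
    (hc : ContinuousOn F {z : ℂ | 0 ≤ z.im ∧ z.im ≤ 1})
    (hd : DifferentiableOn ℂ F {z : ℂ | 0 < z.im ∧ z.im < 1})
    {s : ℝ} {p q : ℂ}
    (hbot : ∀ t : ℝ, F t = Complex.exp (Complex.I * s * t) * p)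
    (htop : ∀ t : ℝ, F (t + Complex.I) = Complex.exp (Complex.I * s * t) * q) :
    p = Complex.exp s * q := by
  set K : ℂ → ℂ := fun z => F z * Complex.exp (-(Complex.I * s * z)) with hK
  have habs_exp : ∀ z : ℂ, ‖Complex.exp (-(Complex.I * s * z))‖ = Real.exp (s * z.im) := by
    intro z
    rw [Complex.norm_exp]
    congr 1
    have : (-(Complex.I * s * z)).re = s * z.im := by
      simp [Complex.mul_re, Complex.mul_im]
    rw [this]
  have hKbot : ∀ z : ℂ, z.im = 0 → K z = p := by
    intro z hz
    have hzre : ((z.re : ℝ) : ℂ) = z := Complex.ext (by simp) (by simp [hz])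
    rw [hK]
    simp only
    rw [← hzre, hbot z.re]
    rw [mul_comm _ p, mul_assoc, ← Complex.exp_add]
    simp
  have hKtop : ∀ z : ℂ, z.im = 1 → K z = Complex.exp s * q := by
    intro z hz
    have hzre : ((z.re : ℝ) : ℂ) + Complex.I = z := Complex.ext (by simp) (by simp [hz])
    rw [hK]
    simp only
    rw [← hzre, htop z.re]
    rw [mul_comm _ q, mul_assoc, ← Complex.exp_add]
    have harg : Complex.I * s * z.re + -(Complex.I * s * (z.re + Complex.I)) = (s : ℂ) := by
      have : Complex.I * Complex.I = -1 := Complex.I_mul_I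
      ring_nf
      rw [Complex.I_sq]
      ring
    rw [harg, mul_comm]
  -- bound for K on the strip
  have hKb : ∀ z : ℂ, 0 ≤ z.im → z.im ≤ 1 → ‖K z‖ ≤ C * Real.exp |s| := by
    intro z h0 h1
    rw [hK]
    simp only [norm_mul]
    have h2 : ‖Complex.exp (-(Complex.I * s * z))‖ = Real.exp (s * z.im) := habs_exp z
    rw [h2]
    have h3 : s * z.im ≤ |s| := by
      rcases abs_cases s with ⟨h, _⟩ | ⟨h, _⟩
      · nlinarith [abs_nonneg s]
      · nlinarith [abs_nonneg s]
    have h4 : Real.exp (s * z.im) ≤ Real.exp |s| := Real.exp_le_exp.mpr h3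
    have h5 := hb z h0 h1
    have h6 : (0:ℝ) ≤ C := le_trans (norm_nonneg _) (hb 0 (by simp) (by simp))
    nlinarith [Real.exp_pos (s * z.im), norm_nonneg (F z)]
  set esq : ℂ := Complex.exp s * q with hesq
  set Hf : ℂ → ℂ := fun z => (K z - p) * (K z - esq) with hHf
  set U : Set ℂ := Complex.im ⁻¹' Set.Ioo 0 1 with hU
  have hUopen : IsOpen U := isOpen_Ioo.preimage Complex.continuous_im
  have hUsub : U ⊆ {z : ℂ | 0 ≤ z.im ∧ z.im ≤ 1} := fun z hz => ⟨hz.1.le, hz.2.le⟩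
  have hclosU : closure U ⊆ {z : ℂ | 0 ≤ z.im ∧ z.im ≤ 1} := by
    have : IsClosed {z : ℂ | 0 ≤ z.im ∧ z.im ≤ 1} := by
      have : {z : ℂ | 0 ≤ z.im ∧ z.im ≤ 1} = Complex.im ⁻¹' Set.Icc 0 1 := rfl
      rw [this]
      exact isClosed_Icc.preimage Complex.continuous_im
    exact closure_minimal hUsub this
  -- continuity / differentiability of K and Hf
  have hexp_cont : Continuous fun z : ℂ => Complex.exp (-(Complex.I * s * z)) := by
    apply Complex.continuous_exp.comp
    continuity
  have hKc : ContinuousOn K {z : ℂ | 0 ≤ z.im ∧ z.im ≤ 1} :=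
    hc.mul hexp_cont.continuousOn
  have hHfc : ContinuousOn Hf {z : ℂ | 0 ≤ z.im ∧ z.im ≤ 1} :=
    ((hKc.sub continuousOn_const).mul (hKc.sub continuousOn_const))
  have hKd : DifferentiableOn ℂ K U := by
    apply DifferentiableOn.mul
    · have : U = {z : ℂ | 0 < z.im ∧ z.im < 1} := rfl
      rw [this]; exact hd
    · apply Differentiable.differentiableOn
      apply Complex.differentiable_exp.comp
      fun_prop
  have hHfd : DifferentiableOn ℂ Hf U :=
    ((hKd.sub (differentiableOn_const _)).mul (hKd.sub (differentiableOn_const _)))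
  have hdcc : DiffContOnCl ℂ Hf U := ⟨hHfd, hHfc.mono hclosU⟩
  -- Phragmen-Lindelof
  set Mb : ℝ := (C * Real.exp |s| + ‖p‖) * (C * Real.exp |s| + ‖esq‖) with hMb
  have hHfbnd : ∀ z : ℂ, 0 ≤ z.im → z.im ≤ 1 → ‖Hf z‖ ≤ Mb := by
    intro z h0 h1
    rw [hHf]
    simp only [norm_mul]
    have h2 := hKb z h0 h1
    have h3 : ‖K z - p‖ ≤ C * Real.exp |s| + ‖p‖ := le_trans (norm_sub_le _ _) (by linarith)
    have h4 : ‖K z - esq‖ ≤ C * Real.exp |s| + ‖esq‖ := le_trans (norm_sub_le _ _) (by linarith)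
    have h5 : (0:ℝ) ≤ ‖K z - p‖ := norm_nonneg _
    have h6 : (0:ℝ) ≤ ‖K z - esq‖ := norm_nonneg _
    nlinarith
  have hzero : ∀ z : ℂ, 0 ≤ z.im → z.im ≤ 1 → Hf z = 0 := by
    intro z h0 h1
    have := PhragmenLindelof.horizontal_strip (a := 0) (b := 1) (C := 0) (z := z) hdcc ?_ ?_ ?_ h0 h1
    · simpa using norm_le_zero_iff.mp this
    · refine ⟨1, by linarith [Real.pi_gt_three], max Mb 1, ?_⟩
      apply Asymptotics.IsBigO.of_bound 1
      rw [Filter.eventually_inf_principal]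
      apply Filter.Eventually.of_forall
      intro w hw
      have hwb := hHfbnd w (hw.1 : (0:ℝ) < w.im).le (hw.2 : w.im < 1).le
      have h7 : Mb ≤ max Mb 1 := le_max_left _ _
      have h8 : (max Mb 1 : ℝ) ≤ Real.exp (max Mb 1 * Real.exp (1 * |w.re|)) := by
        have h9 : (1:ℝ) ≤ Real.exp (1 * |w.re|) := by
          rw [one_mul]; exact Real.one_le_exp (abs_nonneg _)
        have h10 : max Mb 1 ≤ max Mb 1 * Real.exp (1 * |w.re|) := by
          nlinarith [le_max_right Mb 1]
        calc (max Mb 1 : ℝ) ≤ max Mb 1 * Real.exp (1 * |w.re|) := h10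
          _ ≤ Real.exp (max Mb 1 * Real.exp (1 * |w.re|)) := by
              linarith [Real.add_one_le_exp (max Mb 1 * Real.exp (1 * |w.re|))]
      rw [one_mul]
      calc ‖Hf w‖ ≤ Mb := hwb
        _ ≤ max Mb 1 := h7
        _ ≤ Real.exp (max Mb 1 * Real.exp (1 * |w.re|)) := h8
        _ ≤ ‖Real.exp (max Mb 1 * Real.exp (1 * |w.re|))‖ := le_abs_self _
    · intro w hw
      rw [hHf]
      simp only
      rw [hKbot w hw]
      simp
    · intro w hw
      rw [hHf]
      simp only
      rw [hKtop w hw]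
      simp
  -- connectedness argument
  by_contra hne
  have hdichot : ∀ z ∈ U, K z = p ∨ K z = esq := by
    intro z hz
    have := hzero z (hz.1 : (0:ℝ) < z.im).le (hz.2 : z.im < 1).le
    rcases mul_eq_zero.mp this with h | h
    · left; exact sub_eq_zero.mp h
    · right; exact sub_eq_zero.mp h
  have hUconn : IsPreconnected U := by
    have hconv : Convex ℝ U := by
      have := (convex_Ioo (0:ℝ) 1).linear_preimage Complex.imLm
      simpa [hU] using this
    exact hconv.isPreconnected
  -- the two closed value sets
  set r : ℝ := dist p esq / 2 with hr
  have hrpos : 0 < r := by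
    rw [hr]
    have : 0 < dist p esq := dist_pos.mpr hne
    linarith
  have hKcU : ContinuousOn K U := hKc.mono hUsub
  set A : Set ℂ := U ∩ K ⁻¹' Metric.ball p r with hA
  set B : Set ℂ := U ∩ K ⁻¹' Metric.ball esq r with hB
  have hAopen : IsOpen A := hKcU.isOpen_inter_preimage hUopen Metric.isOpen_ball
  have hBopen : IsOpen B := hKcU.isOpen_inter_preimage hUopen Metric.isOpen_ball
  have hcover : U ⊆ A ∪ B := by
    intro z hz
    rcases hdichot z hz with h | h
    · exact Or.inl ⟨hz, by simp [h, Metric.mem_ball, hrpos]⟩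
    · exact Or.inr ⟨hz, by simp [h, Metric.mem_ball, hrpos]⟩
  have hdisj : A ∩ B = ∅ := by
    rw [Set.eq_empty_iff_forall_notMem]
    rintro z ⟨⟨_, hzA⟩, ⟨_, hzB⟩⟩
    have h1 : dist (K z) p < r := Metric.mem_ball.mp hzA
    have h2 : dist (K z) esq < r := Metric.mem_ball.mp hzB
    have h3 : dist p esq ≤ dist p (K z) + dist (K z) esq := dist_triangle _ _ _
    rw [dist_comm p (K z)] at h3
    rw [hr] at h1 h2
    linarith
  -- tendsto helpers: sequences approaching the boundary from inside
  have hseq : ∀ (w : ℂ), w.im = 0 ∨ w.im = 1 → (∀ z ∈ U, K z = p) ∨ (∀ z ∈ U, K z = esq) → True := fun _ _ _ => trivial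
  -- one of A, B is empty
  have hone : (∀ z ∈ U, K z = p) ∨ (∀ z ∈ U, K z = esq) := by
    by_cases hAne : A.Nonempty
    · by_cases hBne : B.Nonempty
      · exfalso
        have hAU : (U ∩ A).Nonempty := by
          obtain ⟨z, hz⟩ := hAne
          exact ⟨z, hz.1, hz⟩
        have hBU : (U ∩ B).Nonempty := by
          obtain ⟨z, hz⟩ := hBne
          exact ⟨z, hz.1, hz⟩
        obtain ⟨z, hz⟩ := hUconn A B hAopen hBopen hcover hAU hBU
        rw [Set.eq_empty_iff_forall_notMem] at hdisj
        exact hdisj z hz.2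
      · left
        intro z hz
        rcases hdichot z hz with h | h
        · exact h
        · exfalso
          exact hBne ⟨z, hz, by simp [h, Metric.mem_ball, hrpos]⟩
    · right
      intro z hz
      rcases hdichot z hz with h | h
      · exfalso
        exact hAne ⟨z, hz, by simp [h, Metric.mem_ball, hrpos]⟩
      · exact h
  -- derive contradiction from boundary continuity
  have hlim : ∀ (w : ℂ) (zs : ℕ → ℂ), (∀ n, zs n ∈ U) →
      Filter.Tendsto zs Filter.atTop (𝓝 w) → 0 ≤ w.im → w.im ≤ 1 →
      ∀ v : ℂ, (∀ z ∈ U, K z = v) → K w = v := by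
    intro w zs hzs hlimzs h0 h1 v hv
    have hcw : ContinuousWithinAt K {z : ℂ | 0 ≤ z.im ∧ z.im ≤ 1} w := hKc w ⟨h0, h1⟩
    have htend : Filter.Tendsto zs Filter.atTop (𝓝[{z : ℂ | 0 ≤ z.im ∧ z.im ≤ 1}] w) := by
      rw [tendsto_nhdsWithin_iff]
      exact ⟨hlimzs, Filter.Eventually.of_forall fun n => hUsub (hzs n)⟩
    have h2 : Filter.Tendsto (fun n => K (zs n)) Filter.atTop (𝓝 (K w)) :=
      (hcw.tendsto.comp htend)
    have h3 : (fun n => K (zs n)) = fun _ => v := by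
      funext n; exact hv _ (hzs n)
    rw [h3] at h2
    exact tendsto_nhds_unique h2 tendsto_const_nhds
  -- the sequence (1/(n+2)) I → 0 and (1 - 1/(n+2)) I → I
  have hrat : Filter.Tendsto (fun n : ℕ => 1 / ((n:ℝ) + 2)) Filter.atTop (𝓝 0) := by
    have h1 : Filter.Tendsto (fun n : ℕ => ((n:ℝ) + 2)) Filter.atTop Filter.atTop :=
      Filter.tendsto_atTop_add_const_right _ 2 tendsto_natCast_atTop_atTop
    simpa [one_div, Pi.inv_def] using h1.inv_tendsto_atTop
  have himI : ∀ a : ℝ, ((a:ℂ) * Complex.I).im = a := by intro a; simp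
  have hmem1 : ∀ n : ℕ, (((1 / ((n:ℝ) + 2) : ℝ) : ℂ) * Complex.I).im ∈ Set.Ioo (0:ℝ) 1 := by
    intro n
    have h2 : (0:ℝ) < (n:ℝ) + 2 := by positivity
    rw [himI]
    constructor
    · positivity
    · rw [div_lt_one h2]; linarith
  rcases hone with hcase | hcase
  · -- K ≡ p on U, contradiction at I where K = esq
    have hlim1 : Filter.Tendsto (fun n : ℕ => (1 - 1 / ((n:ℝ) + 2) : ℝ) * Complex.I) Filter.atTop (𝓝 Complex.I) := by
      have h1 : Filter.Tendsto (fun n : ℕ => (1 - 1 / ((n:ℝ) + 2) : ℝ)) Filter.atTop (𝓝 1) := by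
        have := (tendsto_const_nhds (x := (1:ℝ)) (f := Filter.atTop (α := ℕ))).sub hrat
        simpa using this
      have h2 : Filter.Tendsto (fun n : ℕ => ((1 - 1 / ((n:ℝ) + 2) : ℝ) : ℂ)) Filter.atTop (𝓝 (1:ℂ)) := by
        have := (Complex.continuous_ofReal.tendsto 1).comp h1
        simpa [Function.comp_def] using this
      have := h2.mul_const Complex.I
      simpa using this
    have hKI : K Complex.I = p := by
      apply hlim _ _ _ hlim1 (by simp) (by simp) p hcase
      intro n
      have := hmem1 n
      simp only [hU, Set.mem_preimage]
      rw [himI]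
      constructor
      · have h2 : (0:ℝ) < (n:ℝ) + 2 := by positivity
        have h3 : 1 / ((n:ℝ) + 2) < 1 := by rw [div_lt_one h2]; linarith
        linarith
      · have h2 : (0:ℝ) < (n:ℝ) + 2 := by positivity
        have h3 : 0 < 1 / ((n:ℝ) + 2) := by positivity
        linarith
    have := hKtop Complex.I (by simp)
    rw [hKI] at this
    exact hne this
  · -- K ≡ esq on U, contradiction at 0 where K = p
    have hlim0 : Filter.Tendsto (fun n : ℕ => ((1 / ((n:ℝ) + 2) : ℝ) : ℂ) * Complex.I) Filter.atTop (𝓝 0) := by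
      have h2 : Filter.Tendsto (fun n : ℕ => ((1 / ((n:ℝ) + 2) : ℝ) : ℂ)) Filter.atTop (𝓝 (0:ℂ)) := by
        have := (Complex.continuous_ofReal.tendsto 0).comp hrat
        simpa [Function.comp_def] using this
      have := h2.mul_const Complex.I
      simpa using this
    have hK0 : K 0 = esq := by
      apply hlim _ _ _ hlim0 (by simp) (by simp) esq hcase
      intro n
      simp only [hU, Set.mem_preimage]
      exact hmem1 n
    have := hKbot 0 (by simp)
    rw [hK0] at this
    exact hne this.symm

@[simp] lemma conjAct_apply (u : H ≃ₗᵢ[ℂ] H) (a : H →L[ℂ] H) (η : H) :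
    conjAct u a η = u (a (u.symm η)) := rfl

lemma exists_eigenoperator
    (M : VonNeumannAlgebra H) (Ω : H)
    (D : ℝ → (H ≃ₗᵢ[ℂ] H))
    (hD0 : D 0 = LinearIsometryEquiv.refl ℂ H)
    (hDadd : ∀ s t : ℝ, D (s + t) = (D s).trans (D t))
    (hDcont : ∀ x : H, Continuous fun t => D t x)
    (hDΩ : ∀ t, D t Ω = Ω)
    (hDM : ∀ t, conjAct (D t) '' (M : Set (H →L[ℂ] H)) = (M : Set (H →L[ℂ] H)))
    (χ : ℝ → ℂ) (hχcont : Continuous χ) (hχ0 : χ 0 = 1)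
    (hχmul : ∀ u v : ℝ, χ (u + v) = χ u * χ v)
    (hχabs : ∀ t, ‖χ t‖ = 1)
    (x : H →L[ℂ] H) (hx : x ∈ M) :
    ∃ m : H →L[ℂ] H, m ∈ M ∧ (∀ u : ℝ, conjAct (D u) m = χ u • m) ∧
      (∀ w : H, (∀ t, D t w = χ t • w) → ⟪w, m Ω⟫ = ⟪w, x Ω⟫) := by
  classical
  -- basic facts about D
  have hDcomp : ∀ s t : ℝ, ∀ w : H, D t (D s w) = D (s + t) w := by
    intro s t w; rw [hDadd s t]; rfl
  have hDsymm : ∀ t : ℝ, (D t).symm = D (-t) := by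
    intro t
    have h : ∀ w, D t (D (-t) w) = w := by
      intro w
      rw [hDcomp (-t) t w]
      simp [hD0]
    apply LinearIsometryEquiv.ext
    intro w
    have h2 := congrArg (fun v => (D t).symm v) (h w)
    simpa using h2.symm
  have hinnerD : ∀ (u : ℝ) (ξ w : H), ⟪ξ, D u w⟫ = ⟪D (-u) ξ, w⟫ := by
    intro u ξ w
    conv_lhs => rw [show ξ = D u ((D u).symm ξ) from (((D u).apply_symm_apply ξ)).symm]
    rw [LinearIsometryEquiv.inner_map_map, hDsymm]
  have hχconjneg : ∀ t : ℝ, (starRingEnd ℂ) (χ (-t)) = χ t := by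
    intro t
    have h1 : χ t * χ (-t) = 1 := by rw [← hχmul]; simp [hχ0]
    have h2 : χ (-t) * (starRingEnd ℂ) (χ (-t)) = 1 := by
      rw [Complex.mul_conj]
      rw [Complex.normSq_eq_norm_sq, hχabs]
      norm_num
    have h3 : χ t = (starRingEnd ℂ) (χ (-t)) := by
      calc χ t = χ t * (χ (-t) * (starRingEnd ℂ) (χ (-t))) := by rw [h2, mul_one]
        _ = (χ t * χ (-t)) * (starRingEnd ℂ) (χ (-t)) := by ring
        _ = (starRingEnd ℂ) (χ (-t)) := by rw [h1, one_mul]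
    exact h3.symm
  have hχconjmul : ∀ t : ℝ, (starRingEnd ℂ) (χ t) * χ t = 1 := by
    intro t
    rw [mul_comm, Complex.mul_conj, Complex.normSq_eq_norm_sq, hχabs]
    norm_num
  have hχnorm : ∀ t : ℝ, ‖χ t‖ = 1 := by
    intro t; rw [hχabs]
  -- the moving vector family
  have hmove : ∀ v : ℝ → H, Continuous v → Continuous (fun t => D t (v t)) := by
    intro v hv
    rw [continuous_iff_continuousAt]
    intro t₀
    rw [Metric.continuousAt_iff]
    intro ε hε
    have hv' : ContinuousAt v t₀ := hv.continuousAt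
    rw [Metric.continuousAt_iff] at hv'
    obtain ⟨δ₁, hδ₁pos, hδ₁⟩ := hv' (ε/2) (by linarith)
    have hD' : ContinuousAt (fun t => D t (v t₀)) t₀ := (hDcont (v t₀)).continuousAt
    rw [Metric.continuousAt_iff] at hD'
    obtain ⟨δ₂, hδ₂pos, hδ₂⟩ := hD' (ε/2) (by linarith)
    refine ⟨min δ₁ δ₂, lt_min hδ₁pos hδ₂pos, fun {t} ht => ?_⟩
    have h1 : dist t t₀ < δ₁ := lt_of_lt_of_le ht (min_le_left _ _)
    have h2 : dist t t₀ < δ₂ := lt_of_lt_of_le ht (min_le_right _ _)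
    calc dist (D t (v t)) (D t₀ (v t₀))
        ≤ dist (D t (v t)) (D t (v t₀)) + dist (D t (v t₀)) (D t₀ (v t₀)) := dist_triangle _ _ _
      _ = dist (v t) (v t₀) + dist (D t (v t₀)) (D t₀ (v t₀)) := by
          rw [(D t).dist_map]
      _ < ε/2 + ε/2 := add_lt_add (hδ₁ h1) (hδ₂ h2)
      _ = ε := by ring
  -- integrand
  set g : H → ℝ → H := fun η t => (starRingEnd ℂ) (χ t) • (D t) (x ((D (-t)) η)) with hg
  have hgcont : ∀ η, Continuous (g η) := by
    intro η
    apply Continuous.smul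
    · exact Complex.continuous_conj.comp hχcont
    · apply hmove
      apply x.continuous.comp
      have : Continuous fun t : ℝ => D (-t) η := (hDcont η).comp continuous_neg
      exact this
  have hgnorm : ∀ η t, ‖g η t‖ ≤ ‖x‖ * ‖η‖ := by
    intro η t
    rw [hg]
    simp only [norm_smul, RCLike.norm_conj, hχnorm, one_mul,
      LinearIsometryEquiv.norm_map]
    calc ‖x ((D (-t)) η)‖ ≤ ‖x‖ * ‖(D (-t)) η‖ := x.le_opNorm _
      _ = ‖x‖ * ‖η‖ := by rw [LinearIsometryEquiv.norm_map]
  have hgint : ∀ η (a b : ℝ), IntervalIntegrable (g η) volume a b := by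
    intro η a b; exact (hgcont η).intervalIntegrable a b
  -- the averages
  set T : ℕ → ℝ := fun n => (n : ℝ) + 1 with hT
  have hTpos : ∀ n, 0 < T n := by intro n; rw [hT]; positivity
  set aseq : ℕ → H →L[ℂ] H := fun n =>
    LinearMap.mkContinuous
      { toFun := fun η => ((2 * T n : ℝ) : ℂ)⁻¹ • ∫ t in (-(T n))..(T n), g η t
        map_add' := by
          intro η η'
          show ((2 * T n : ℝ) : ℂ)⁻¹ • (∫ t in (-(T n))..(T n), g (η + η') t)
              = ((2 * T n : ℝ) : ℂ)⁻¹ • (∫ t in (-(T n))..(T n), g η t)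
                + ((2 * T n : ℝ) : ℂ)⁻¹ • (∫ t in (-(T n))..(T n), g η' t)
          have h1 : ∀ t, g (η + η') t = g η t + g η' t := by
            intro t
            rw [hg]
            simp only [_root_.map_add, smul_add]
          rw [show (fun t => g (η + η') t) = fun t => g η t + g η' t from funext h1]
          rw [_root_.intervalIntegral.integral_add (hgint η _ _) (hgint η' _ _), smul_add]
        map_smul' := by
          intro c η
          show ((2 * T n : ℝ) : ℂ)⁻¹ • (∫ t in (-(T n))..(T n), g (c • η) t)
              = c • (((2 * T n : ℝ) : ℂ)⁻¹ • ∫ t in (-(T n))..(T n), g η t)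
          have h1 : ∀ t, g (c • η) t = c • g η t := by
            intro t
            rw [hg]
            simp only [_root_.map_smul]
            rw [smul_comm]
          rw [show (fun t => g (c • η) t) = fun t => c • g η t from funext h1]
          rw [_root_.intervalIntegral.integral_smul, smul_comm] }
      ‖x‖ (by
        intro η
        simp only [LinearMap.coe_mk, AddHom.coe_mk]
        rw [norm_smul]
        have h1 : ‖∫ t in (-(T n))..(T n), g η t‖ ≤ (‖x‖ * ‖η‖) * |T n - (-(T n))| :=
          intervalIntegral.norm_integral_le_of_norm_le_const (fun t _ => hgnorm η t)
        have h2 : |T n - (-(T n))| = 2 * T n := by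
          rw [abs_of_pos (by linarith [hTpos n])]; ring
        have h3 : ‖((2 * T n : ℝ) : ℂ)⁻¹‖ = (2 * T n)⁻¹ := by
          rw [norm_inv, Complex.norm_real, Real.norm_eq_abs,
            abs_of_pos (by linarith [hTpos n])]
        rw [h3]
        rw [h2] at h1
        have h4 : (0:ℝ) < 2 * T n := by linarith [hTpos n]
        calc (2 * T n)⁻¹ * ‖∫ t in (-(T n))..(T n), g η t‖
            ≤ (2 * T n)⁻¹ * ((‖x‖ * ‖η‖) * (2 * T n)) := by
              apply mul_le_mul_of_nonneg_left h1 (by positivity)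
          _ = ‖x‖ * ‖η‖ := by field_simp [(hTpos n).ne']) with haseq
  have haseq_apply : ∀ n η, aseq n η = ((2 * T n : ℝ) : ℂ)⁻¹ • ∫ t in (-(T n))..(T n), g η t := by
    intro n η; rfl
  have haseq_norm : ∀ n, ‖aseq n‖ ≤ ‖x‖ :=
    fun n => LinearMap.mkContinuous_norm_le _ (norm_nonneg x) _
  have hTne : ∀ n, ((2 * T n : ℝ) : ℂ) ≠ 0 := by
    intro n
    simp only [ne_eq, Complex.ofReal_eq_zero]
    nlinarith [hTpos n]
  -- pairing with eigenvectors
  have hpair : ∀ n (w : H), (∀ t, D t w = χ t • w) → ⟪w, aseq n Ω⟫ = ⟪w, x Ω⟫ := by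
    intro n w hw
    rw [haseq_apply, inner_smul_right]
    have h1 : ⟪w, ∫ t in (-(T n))..(T n), g Ω t⟫ = ∫ t in (-(T n))..(T n), ⟪w, g Ω t⟫ := by
      exact ((innerSL ℂ w).intervalIntegral_comp_comm (hgint Ω _ _)).symm
    rw [h1]
    have h2 : ∀ t : ℝ, ⟪w, g Ω t⟫ = ⟪w, x Ω⟫ := by
      intro t
      rw [hg]
      simp only
      rw [inner_smul_right, hDΩ, hinnerD, hw, inner_smul_left, hχconjneg]
      rw [← mul_assoc, hχconjmul, one_mul]
    rw [show (fun t => ⟪w, g Ω t⟫) = fun _ => ⟪w, x Ω⟫ from funext h2]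
    rw [intervalIntegral.integral_const]
    have h3 : (T n - -(T n)) • ⟪w, x Ω⟫ = ((2 * T n : ℝ) : ℂ) * ⟪w, x Ω⟫ := by
      rw [show T n - -(T n) = 2 * T n by ring]
      rw [← Complex.real_smul]
    rw [h3, ← mul_assoc, inv_mul_cancel₀ (hTne n), one_mul]
  -- covariance estimate
  have hcov : ∀ (u : ℝ) (n : ℕ) (η : H),
      ‖conjAct (D u) (aseq n) η - χ u • (aseq n) η‖ ≤ (|u| / T n) * (‖x‖ * ‖η‖) := by
    intro u n η
    set k : ℝ → H := fun r => D r (x (D (-r) η)) with hk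
    set Fm : ℝ → H := fun r => ((starRingEnd ℂ) (χ (r - u))) • k r with hFm
    have hkcont : Continuous k := by
      apply hmove
      exact x.continuous.comp ((hDcont η).comp continuous_neg)
    have hFmcont : Continuous Fm := by
      apply Continuous.smul
      · exact Complex.continuous_conj.comp (hχcont.comp (continuous_id.sub continuous_const))
      · exact hkcont
    have hFmint : ∀ a b : ℝ, IntervalIntegrable Fm volume a b :=
      fun a b => hFmcont.intervalIntegrable a b
    have hgη : ∀ r : ℝ, g η r = (starRingEnd ℂ) (χ r) • k r := fun r => rfl
    -- Step B
    have hB : ∀ t : ℝ, D u (g (D (-u) η) t) = Fm (t + u) := by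
      intro t
      have h1 : g (D (-u) η) t = (starRingEnd ℂ) (χ t) • D t (x (D (-u + -t) η)) := by
        rw [hg]
        simp only
        rw [hDcomp (-u) (-t)]
      rw [h1, _root_.map_smul]
      rw [hDcomp t u]
      rw [hFm]
      simp only
      rw [show t + u - u = t by ring]
      rw [hk]
      simp only
      rw [show -(t + u) = -u + -t by ring]
    -- Step A and C
    have hA : conjAct (D u) (aseq n) η
        = ((2 * T n : ℝ) : ℂ)⁻¹ • ∫ t in (-(T n) + u)..(T n + u), Fm t := by
      rw [conjAct_apply, hDsymm, haseq_apply, _root_.map_smul]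
      congr 1
      have h2 : (D u) (∫ t in (-(T n))..(T n), g (D (-u) η) t)
          = ∫ t in (-(T n))..(T n), D u (g (D (-u) η) t) := by
        exact ((D u).toLinearIsometry.toContinuousLinearMap.intervalIntegral_comp_comm
          (hgint _ _ _)).symm
      rw [h2]
      rw [show (fun t => D u (g (D (-u) η) t)) = fun t => Fm (t + u) from funext hB]
      exact intervalIntegral.integral_comp_add_right Fm u
    -- Step D
    have hD' : ∀ r : ℝ, Fm r = χ u • g η r := by
      intro r
      have h3 : χ (r - u) = χ r * (starRingEnd ℂ) (χ u) := by
        have h4 : χ (r - u) * χ u = χ r := by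
          rw [← hχmul]
          congr 1
          ring
        calc χ (r - u) = χ (r - u) * (χ u * (starRingEnd ℂ) (χ u)) := by
              rw [mul_comm (χ u), hχconjmul, mul_one]
          _ = (χ (r - u) * χ u) * (starRingEnd ℂ) (χ u) := by ring
          _ = χ r * (starRingEnd ℂ) (χ u) := by rw [h4]
      rw [hFm]
      simp only
      rw [h3, map_mul, Complex.conj_conj, hgη, smul_smul]
      congr 1
      ring
    have hA2 : conjAct (D u) (aseq n) η
        = ((2 * T n : ℝ) : ℂ)⁻¹ • (χ u • ∫ t in (-(T n) + u)..(T n + u), g η t) := by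
      rw [hA]
      congr 1
      rw [show Fm = fun r => χ u • g η r from funext hD']
      exact intervalIntegral.integral_smul (χ u) (g η)
    -- Step E, F
    have hF : (∫ t in (-(T n) + u)..(T n + u), g η t) - (∫ t in (-(T n))..(T n), g η t)
        = (∫ t in (-(T n) + u)..(-(T n)), g η t) + ∫ t in (T n)..(T n + u), g η t := by
      have e1 : (∫ t in (-(T n) + u)..(-(T n)), g η t) + (∫ t in (-(T n))..(T n), g η t)
          = ∫ t in (-(T n) + u)..(T n), g η t :=
        intervalIntegral.integral_add_adjacent_intervals (hgint η _ _) (hgint η _ _)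
      have e2 : (∫ t in (-(T n) + u)..(T n), g η t) + (∫ t in (T n)..(T n + u), g η t)
          = ∫ t in (-(T n) + u)..(T n + u), g η t :=
        intervalIntegral.integral_add_adjacent_intervals (hgint η _ _) (hgint η _ _)
      rw [← e2, ← e1]
      abel
    have hdiff : conjAct (D u) (aseq n) η - χ u • (aseq n) η
        = ((2 * T n : ℝ) : ℂ)⁻¹ • (χ u •
            ((∫ t in (-(T n) + u)..(-(T n)), g η t) + ∫ t in (T n)..(T n + u), g η t)) := by
      rw [hA2, haseq_apply]
      rw [smul_comm (χ u) (((2 * T n : ℝ) : ℂ)⁻¹)]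
      rw [← smul_sub, ← smul_sub, ← hF]
    rw [hdiff]
    have hn1 : ‖∫ t in (-(T n) + u)..(-(T n)), g η t‖ ≤ (‖x‖ * ‖η‖) * |u| := by
      have := intervalIntegral.norm_integral_le_of_norm_le_const
        (a := -(T n) + u) (b := -(T n)) (C := ‖x‖ * ‖η‖) (f := g η)
        (fun t _ => hgnorm η t)
      calc ‖∫ t in (-(T n) + u)..(-(T n)), g η t‖ ≤ (‖x‖ * ‖η‖) * |(-(T n)) - ((-(T n)) + u)| := this
        _ = (‖x‖ * ‖η‖) * |u| := by rw [show (-(T n)) - ((-(T n)) + u) = -u by ring, abs_neg]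
    have hn2 : ‖∫ t in (T n)..(T n + u), g η t‖ ≤ (‖x‖ * ‖η‖) * |u| := by
      have := intervalIntegral.norm_integral_le_of_norm_le_const
        (a := T n) (b := T n + u) (C := ‖x‖ * ‖η‖) (f := g η)
        (fun t _ => hgnorm η t)
      calc ‖∫ t in (T n)..(T n + u), g η t‖ ≤ (‖x‖ * ‖η‖) * |(T n + u) - T n| := this
        _ = (‖x‖ * ‖η‖) * |u| := by rw [show T n + u - T n = u by ring]
    rw [norm_smul, norm_smul, hχnorm, one_mul]
    have h6 : ‖((2 * T n : ℝ) : ℂ)⁻¹‖ = (2 * T n)⁻¹ := by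
      rw [norm_inv, Complex.norm_real, Real.norm_eq_abs, abs_of_pos (by linarith [hTpos n])]
    rw [h6]
    have h7 := norm_add_le (∫ t in (-(T n) + u)..(-(T n)), g η t) (∫ t in (T n)..(T n + u), g η t)
    have h8 : (0:ℝ) < 2 * T n := by linarith [hTpos n]
    have h9 : ‖(∫ t in (-(T n) + u)..(-(T n)), g η t) + ∫ t in (T n)..(T n + u), g η t‖
        ≤ 2 * ((‖x‖ * ‖η‖) * |u|) := by linarith
    calc (2 * T n)⁻¹ * ‖(∫ t in (-(T n) + u)..(-(T n)), g η t) + ∫ t in (T n)..(T n + u), g η t‖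
        ≤ (2 * T n)⁻¹ * (2 * ((‖x‖ * ‖η‖) * |u|)) := by
          apply mul_le_mul_of_nonneg_left h9 (by positivity)
      _ = (|u| / T n) * (‖x‖ * ‖η‖) := by field_simp
  -- commutation with the commutant
  have hcomm : ∀ z ∈ Set.centralizer (M : Set (H →L[ℂ] H)), ∀ (n : ℕ) (η : H),
      z ((aseq n) η) = (aseq n) (z η) := by
    intro z hz n η
    rw [haseq_apply, haseq_apply, _root_.map_smul]
    congr 1
    have h1 : z (∫ t in (-(T n))..(T n), g η t) = ∫ t in (-(T n))..(T n), z (g η t) :=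
      (z.intervalIntegral_comp_comm (hgint η _ _)).symm
    rw [h1]
    congr 1
    funext t
    rw [hg]
    simp only [_root_.map_smul]
    congr 1
    have hσx : conjAct (D t) x ∈ (M : Set (H →L[ℂ] H)) := by
      rw [← hDM t]
      exact Set.mem_image_of_mem _ hx
    have h2 : (conjAct (D t) x) * z = z * (conjAct (D t) x) := (Set.mem_centralizer_iff.mp hz) _ hσx
    have h3 : (conjAct (D t) x) (z η) = z ((conjAct (D t) x) η) := by
      have := congrArg (fun w => w η) h2
      simpa [ContinuousLinearMap.mul_apply] using this
    have h4 : ∀ w : H, (conjAct (D t) x) w = D t (x (D (-t) w)) := by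
      intro w
      rw [conjAct_apply, hDsymm]
    rw [← h4, ← h4, h3]
  -- pass to the limit
  obtain ⟨m, hmnorm, hmlim⟩ := exists_wot_limit aseq ‖x‖ haseq_norm
  have hTinv : Filter.Tendsto (fun n : ℕ => (T n)⁻¹) Filter.atTop (𝓝 0) := by
    have h1 : Filter.Tendsto T Filter.atTop Filter.atTop := by
      rw [hT]
      exact Filter.tendsto_atTop_add_const_right _ 1 tendsto_natCast_atTop_atTop
    exact h1.inv_tendsto_atTop
  refine ⟨m, ?_, ?_, ?_⟩
  · -- m ∈ M
    have hmem : m ∈ Set.centralizer (Set.centralizer (M : Set (H →L[ℂ] H))) := by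
      rw [Set.mem_centralizer_iff]
      intro z hz
      ext η
      apply ext_inner_left ℂ
      intro ξ
      rw [ContinuousLinearMap.mul_apply, ContinuousLinearMap.mul_apply]
      have h1 : ⟪ξ, z (m η)⟫ = ⟪ContinuousLinearMap.adjoint z ξ, m η⟫ :=
        (ContinuousLinearMap.adjoint_inner_left z (m η) ξ).symm
      rw [h1]
      have h2 : ∀ n : ℕ, ⟪ContinuousLinearMap.adjoint z ξ, (aseq n) η⟫ = ⟪ξ, (aseq n) (z η)⟫ := by
        intro n
        rw [ContinuousLinearMap.adjoint_inner_left]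
        rw [hcomm z hz n η]
      have h3 := hmlim (ContinuousLinearMap.adjoint z ξ) η
      rw [show (fun n => ⟪ContinuousLinearMap.adjoint z ξ, (aseq n) η⟫)
          = fun n => ⟪ξ, (aseq n) (z η)⟫ from funext h2] at h3
      exact tendsto_nhds_unique h3 (hmlim ξ (z η))
    have := M.centralizer_centralizer
    rw [← SetLike.mem_coe, ← this]
    exact hmem
  · -- covariance
    intro u
    ext η
    apply ext_inner_left ℂ
    intro ξ
    have h1 : ∀ (b : H →L[ℂ] H), ⟪ξ, conjAct (D u) b η⟫ = ⟪D (-u) ξ, b (D (-u) η)⟫ := by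
      intro b
      rw [conjAct_apply, hDsymm, hinnerD]
    have h2 := hmlim (D (-u) ξ) (D (-u) η)
    rw [show (fun n => ⟪D (-u) ξ, (aseq n) (D (-u) η)⟫)
        = fun n => ⟪ξ, conjAct (D u) (aseq n) η⟫ from funext (fun n => (h1 (aseq n)).symm)] at h2
    rw [← h1 m] at h2
    -- also the sequence tends to χ u * ⟪ξ, m η⟫
    have h3 : Filter.Tendsto (fun n => χ u * ⟪ξ, (aseq n) η⟫) (UF : Filter ℕ)
        (𝓝 (χ u * ⟪ξ, m η⟫)) := (hmlim ξ η).const_mul (χ u)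
    have h4 : Filter.Tendsto (fun n => ⟪ξ, conjAct (D u) (aseq n) η⟫ - χ u * ⟪ξ, (aseq n) η⟫)
        (UF : Filter ℕ) (𝓝 0) := by
      apply Filter.Tendsto.mono_left _ UF_le_atTop
      have hbnd : ∀ n : ℕ, ‖⟪ξ, conjAct (D u) (aseq n) η⟫ - χ u * ⟪ξ, (aseq n) η⟫‖
          ≤ ‖ξ‖ * ((|u| / T n) * (‖x‖ * ‖η‖)) := by
        intro n
        have h5 : ⟪ξ, conjAct (D u) (aseq n) η⟫ - χ u * ⟪ξ, (aseq n) η⟫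
            = ⟪ξ, conjAct (D u) (aseq n) η - χ u • (aseq n) η⟫ := by
          rw [inner_sub_right, inner_smul_right]
        rw [h5]
        calc ‖⟪ξ, conjAct (D u) (aseq n) η - χ u • (aseq n) η⟫‖
            ≤ ‖ξ‖ * ‖conjAct (D u) (aseq n) η - χ u • (aseq n) η‖ := norm_inner_le_norm _ _
          _ ≤ ‖ξ‖ * ((|u| / T n) * (‖x‖ * ‖η‖)) := by
              apply mul_le_mul_of_nonneg_left (hcov u n η) (norm_nonneg ξ)
      have hg0 : Filter.Tendsto (fun n : ℕ => ‖ξ‖ * ((|u| / T n) * (‖x‖ * ‖η‖)))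
          Filter.atTop (𝓝 0) := by
        have h6 : (fun n : ℕ => ‖ξ‖ * ((|u| / T n) * (‖x‖ * ‖η‖)))
            = fun n : ℕ => (‖ξ‖ * (|u| * (‖x‖ * ‖η‖))) * (T n)⁻¹ := by
          funext n
          field_simp
        rw [h6]
        have := hTinv.const_mul (‖ξ‖ * (|u| * (‖x‖ * ‖η‖)))
        simpa using this
      exact squeeze_zero_norm hbnd hg0
    have h7 : Filter.Tendsto (fun n => ⟪ξ, conjAct (D u) (aseq n) η⟫) (UF : Filter ℕ)
        (𝓝 (χ u * ⟪ξ, m η⟫)) := by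
      have := h4.add h3
      simpa using this
    have h8 := tendsto_nhds_unique h2 h7
    rw [h8]
    rw [ContinuousLinearMap.smul_apply, inner_smul_right]
  · -- pairing
    intro w hw
    have h1 : ∀ n : ℕ, ⟪w, (aseq n) Ω⟫ = ⟪w, x Ω⟫ := fun n => hpair n w hw
    have h2 := hmlim w Ω
    rw [show (fun n => ⟪w, (aseq n) Ω⟫) = fun _ => ⟪w, x Ω⟫ from funext h1] at h2
    exact tendsto_nhds_unique h2 tendsto_const_nhds


end Aux

theorem modular_dynamics_ergodic_implies_weakly_mixing
    {H : Type*} [NormedAddCommGroup H] [InnerProductSpace ℂ H] [CompleteSpace H]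
    (M : VonNeumannAlgebra H) (Ω : H) (hΩ : ‖Ω‖ = 1)
    (hcyc : Dense ((fun a : H →L[ℂ] H => a Ω) '' (M : Set (H →L[ℂ] H))))
    (hsep : ∀ a ∈ M, a Ω = 0 → a = 0)
    (D : ℝ → (H ≃ₗᵢ[ℂ] H))
    (hD0 : D 0 = LinearIsometryEquiv.refl ℂ H)
    (hDadd : ∀ s t : ℝ, D (s + t) = (D s).trans (D t))
    (hDcont : ∀ x : H, Continuous fun t => D t x)
    (hDΩ : ∀ t, D t Ω = Ω)
    (hDM : ∀ t, conjAct (D t) '' (M : Set (H →L[ℂ] H)) = (M : Set (H →L[ℂ] H)))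
    (hKMS : IsKMS M Ω fun t => conjAct (D t))
    (herg : ∀ a ∈ M, (∀ t : ℝ, conjAct (D t) a = a) →
      ∃ c : ℂ, a = c • (1 : H →L[ℂ] H)) :
    (Submodule.span ℂ
        {y : H | y ≠ 0 ∧ ∃ χ : ℝ → ℂ, ∀ t, D t y = χ t • y}).topologicalClosure
      = ℂ ∙ Ω := by
  classical
  -- basic consequences of the hypotheses
  have hΩne : Ω ≠ 0 := by
    intro h
    rw [h, norm_zero] at hΩ
    norm_num at hΩ
  have hinnerΩ : ⟪Ω, Ω⟫ = 1 := by
    rw [@inner_self_eq_norm_sq_to_K ℂ, hΩ]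
    norm_num
  have hdense : ∀ v : H, (∀ x ∈ M, ⟪v, x Ω⟫ = 0) → v = 0 := by
    intro v hv
    have hS : IsClosed {w : H | ⟪v, w⟫ = 0} :=
      isClosed_eq (Continuous.inner continuous_const continuous_id) continuous_const
    have himg : ((fun a : H →L[ℂ] H => a Ω) '' (M : Set (H →L[ℂ] H))) ⊆ {w : H | ⟪v, w⟫ = 0} := by
      rintro w ⟨x, hx, rfl⟩
      exact hv x hx
    have huniv : (Set.univ : Set H) ⊆ {w : H | ⟪v, w⟫ = 0} := by
      rw [← hcyc.closure_eq]
      exact closure_minimal himg hS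
    exact inner_self_eq_zero.mp (huniv (Set.mem_univ v))
  -- basic D-group facts
  have hDcomp : ∀ s t : ℝ, ∀ w : H, D t (D s w) = D (s + t) w := by
    intro s t w
    rw [hDadd s t]
    rfl
  have hDsymm : ∀ t : ℝ, (D t).symm = D (-t) := by
    intro t
    have h : ∀ w, D t (D (-t) w) = w := by
      intro w
      rw [hDcomp (-t) t w]
      simp [hD0]
    apply LinearIsometryEquiv.ext
    intro w
    have h2 := congrArg (fun v => (D t).symm v) (h w)
    simpa using h2.symm
  have hinnerD : ∀ (u : ℝ) (ξ w : H), ⟪ξ, D u w⟫ = ⟪D (-u) ξ, w⟫ := by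
    intro u ξ w
    conv_lhs => rw [show ξ = D u ((D u).symm ξ) from (((D u).apply_symm_apply ξ)).symm]
    rw [LinearIsometryEquiv.inner_map_map, hDsymm]
  have hinnerD' : ∀ (r : ℝ) (a b : H), ⟪D r a, b⟫ = ⟪a, D (-r) b⟫ := by
    intro r a b
    calc ⟪D r a, b⟫ = (starRingEnd ℂ) ⟪b, D r a⟫ := (inner_conj_symm _ _).symm
      _ = (starRingEnd ℂ) ⟪D (-r) b, a⟫ := by rw [hinnerD]
      _ = ⟪a, D (-r) b⟫ := inner_conj_symm _ _
  -- key claim: every eigenvector lies in ℂ ∙ Ω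
  have hkey : ∀ y : H, y ≠ 0 → ∀ χ : ℝ → ℂ, (∀ t, D t y = χ t • y) → y ∈ (ℂ ∙ Ω) := by
    intro y hy χ hχ
    have hscal : ∀ c d : ℂ, c • y = d • y → c = d := by
      intro c d h
      have h2 : (c - d) • y = 0 := by rw [sub_smul, h, sub_self]
      rcases smul_eq_zero.mp h2 with h3 | h3
      · exact sub_eq_zero.mp h3
      · exact absurd h3 hy
    have hχmul : ∀ u v : ℝ, χ (u + v) = χ u * χ v := by
      intro u v
      apply hscal
      rw [← hχ (u + v), ← hDcomp u v y, hχ u, _root_.map_smul, hχ v, smul_smul, mul_comm]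
    have hχ0 : χ 0 = 1 := by
      apply hscal
      rw [← hχ 0, hD0, one_smul]
      rfl
    have hχabs : ∀ t, ‖χ t‖ = 1 := by
      intro t
      have h1 : ‖D t y‖ = ‖y‖ := (D t).norm_map y
      rw [hχ t, norm_smul] at h1
      have hyn : ‖y‖ ≠ 0 := norm_ne_zero_iff.mpr hy
      have h2 : ‖χ t‖ * ‖y‖ = 1 * ‖y‖ := by rw [one_mul]; exact h1
      have h3 : ‖χ t‖ = 1 := mul_right_cancel₀ hyn h2
      exact h3
    have hχconjmul : ∀ t : ℝ, (starRingEnd ℂ) (χ t) * χ t = 1 := by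
      intro t
      rw [mul_comm, Complex.mul_conj, Complex.normSq_eq_norm_sq, hχabs]
      norm_num
    have hχcont : Continuous χ := by
      have h1 : ∀ t, χ t = ⟪y, D t y⟫ * (⟪y, y⟫)⁻¹ := by
        intro t
        have h2 : ⟪y, D t y⟫ = χ t * ⟪y, y⟫ := by rw [hχ t, inner_smul_right]
        rw [h2, mul_assoc, mul_inv_cancel₀ (inner_self_ne_zero.mpr hy), mul_one]
      rw [show χ = fun t => ⟪y, D t y⟫ * (⟪y, y⟫)⁻¹ from funext h1]
      exact (Continuous.inner continuous_const (hDcont y)).mul continuous_const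
    obtain ⟨s, hs⟩ := char_exists hχcont hχ0 hχmul hχabs
    by_cases hs0 : s = 0
    · -- invariant case : y ∈ ℂ Ω via ergodicity
      have hχ1 : ∀ t, χ t = 1 := by
        intro t
        rw [hs t, hs0]
        simp
      have hall : ∀ x ∈ M, ⟪y, x Ω⟫ = ⟪Ω, x Ω⟫ * ⟪y, Ω⟫ := by
        intro x hx
        obtain ⟨m, hmM, hmcov, hmpair⟩ := exists_eigenoperator M Ω D hD0 hDadd hDcont hDΩ hDM
          χ hχcont hχ0 hχmul hχabs x hx
        obtain ⟨c, hc⟩ := herg m hmM (fun t => by rw [hmcov t, hχ1 t, one_smul])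
        have hy' := hmpair y hχ
        have hΩ' := hmpair Ω (fun t => by rw [hχ1 t, one_smul]; exact hDΩ t)
        rw [hc] at hy' hΩ'
        simp only [ContinuousLinearMap.smul_apply, ContinuousLinearMap.one_apply,
          inner_smul_right] at hy' hΩ'
        rw [hinnerΩ, mul_one] at hΩ'
        rw [← hy', ← hΩ']
      have hv : y - ⟪Ω, y⟫ • Ω = 0 := by
        apply hdense
        intro x hx
        rw [inner_sub_left, inner_smul_left, inner_conj_symm, hall x hx]
        ring
      rw [Submodule.mem_span_singleton]
      refine ⟨⟪Ω, y⟫, ?_⟩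
      have := sub_eq_zero.mp hv
      exact this.symm
    · -- non-invariant case : contradiction
      exfalso
      obtain ⟨x, hx, hyx⟩ : ∃ x ∈ M, ⟪y, x Ω⟫ ≠ 0 := by
        by_contra h
        push_neg at h
        exact hy (hdense y h)
      obtain ⟨m, hmM, hmcov, hmpair⟩ := exists_eigenoperator M Ω D hD0 hDadd hDcont hDΩ hDM
        χ hχcont hχ0 hχmul hχabs x hx
      have hmy : ⟪y, m Ω⟫ = ⟪y, x Ω⟫ := hmpair y hχ
      have hmΩne : m Ω ≠ 0 := by
        intro h
        rw [h, inner_zero_right] at hmy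
        exact hyx hmy.symm
      have hmne : m ≠ 0 := by
        intro h
        apply hmΩne
        rw [h]
        rfl
      -- star covariance
      have hstarcov : ∀ u : ℝ, conjAct (D u) (star m) = (starRingEnd ℂ) (χ u) • star m := by
        intro u
        have h1 : conjAct (D u) (star m) = star (conjAct (D u) m) := by
          rw [ContinuousLinearMap.star_eq_adjoint, ContinuousLinearMap.star_eq_adjoint]
          apply (ContinuousLinearMap.eq_adjoint_iff _ _).mpr
          intro w v
          rw [conjAct_apply, conjAct_apply, hDsymm]
          rw [hinnerD' u]
          rw [ContinuousLinearMap.adjoint_inner_left]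
          rw [← hinnerD u w]
        rw [h1, hmcov u, star_smul]
        rfl
      have hconjmul : ∀ (u : ℝ) (a b : H →L[ℂ] H),
          conjAct (D u) (a * b) = conjAct (D u) a * conjAct (D u) b := by
        intro u a b
        ext w
        simp [conjAct_apply, ContinuousLinearMap.mul_apply,
          LinearIsometryEquiv.symm_apply_apply]
      obtain ⟨q, hq⟩ := herg (star m * m) (mul_mem (star_mem hmM) hmM) (fun t => by
        rw [hconjmul, hstarcov, hmcov, smul_mul_assoc, mul_smul_comm, smul_smul,
          hχconjmul, one_smul])
      obtain ⟨p, hp⟩ := herg (m * star m) (mul_mem hmM (star_mem hmM)) (fun t => by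
        rw [hconjmul, hstarcov, hmcov, smul_mul_assoc, mul_smul_comm, smul_smul,
          mul_comm (χ t), hχconjmul, one_smul])
      -- values of the constants
      have hqval : q = ⟪m Ω, m Ω⟫ := by
        have h2 : ⟪Ω, (star m * m) Ω⟫ = ⟪m Ω, m Ω⟫ := by
          rw [ContinuousLinearMap.mul_apply, ContinuousLinearMap.star_eq_adjoint,
            ContinuousLinearMap.adjoint_inner_right]
        rw [hq] at h2
        simp only [ContinuousLinearMap.smul_apply, ContinuousLinearMap.one_apply,
          inner_smul_right] at h2
        rw [hinnerΩ, mul_one] at h2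
        exact h2
      have hqne : q ≠ 0 := by
        rw [hqval]
        exact inner_self_ne_zero.mpr hmΩne
      -- p = q
      have hpq : p = q := by
        have h1 : m * (star m * m) = (m * star m) * m := (mul_assoc _ _ _).symm
        rw [hq, hp] at h1
        rw [mul_smul_comm, mul_one, smul_mul_assoc, one_mul] at h1
        have h2 : (q - p) • m = 0 := by rw [sub_smul, h1, sub_self]
        rcases smul_eq_zero.mp h2 with h3 | h3
        · exact (sub_eq_zero.mp h3).symm
        · exact absurd h3 hmne
      -- KMS condition for the pair (m, star m)
      obtain ⟨F, ⟨Cb, hCb⟩, hFc, hFd, hFbot, hFtop⟩ := hKMS m hmM (star m) (star_mem hmM)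
      have hcompval : ∀ (t : ℝ) (A B : H →L[ℂ] H) (c : ℂ),
          ((c • A) ∘L B) Ω = c • (A ∘L B) Ω := by
        intro t A B c
        simp
      have hFbot' : ∀ t : ℝ, F t = Complex.exp (Complex.I * s * t) * p := by
        intro t
        rw [hFbot t]
        have h1 : conjAct (D t) m ∘L star m = χ t • (m ∘L star m) := by
          rw [hmcov t, ContinuousLinearMap.smul_comp]
        rw [show (fun t => conjAct (D t)) t m = conjAct (D t) m from rfl, h1]
        rw [ContinuousLinearMap.smul_apply, inner_smul_right]
        have h2 : (m ∘L star m) = m * star m := rfl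
        rw [h2, hp]
        simp only [ContinuousLinearMap.smul_apply, ContinuousLinearMap.one_apply,
          inner_smul_right]
        rw [hinnerΩ, mul_one, ← hs t]
      have hFtop' : ∀ t : ℝ, F (t + Complex.I) = Complex.exp (Complex.I * s * t) * q := by
        intro t
        rw [hFtop t]
        have h1 : star m ∘L conjAct (D t) m = χ t • (star m ∘L m) := by
          rw [hmcov t, ContinuousLinearMap.comp_smul]
        rw [show (fun t => conjAct (D t)) t m = conjAct (D t) m from rfl, h1]
        rw [ContinuousLinearMap.smul_apply, inner_smul_right]
        have h2 : (star m ∘L m) = star m * m := rfl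
        rw [h2, hq]
        simp only [ContinuousLinearMap.smul_apply, ContinuousLinearMap.one_apply,
          inner_smul_right]
        rw [hinnerΩ, mul_one, ← hs t]
      have hrig := strip_rigidity (fun z h0 h1 => hCb z h0 h1) hFc hFd hFbot' hFtop'
      rw [hpq] at hrig
      have hexp1 : Complex.exp (s : ℂ) = 1 := by
        have h2 : (Complex.exp (s : ℂ) - 1) * q = 0 := by
          rw [sub_mul, one_mul]
          rw [← hrig]
          ring
        rcases mul_eq_zero.mp h2 with h3 | h3
        · have := sub_eq_zero.mp h3
          exact this
        · exact absurd h3 hqne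
      have hreal : Real.exp s = 1 := by
        have h4 : ((Real.exp s : ℝ) : ℂ) = ((1 : ℝ) : ℂ) := by
          rw [Complex.ofReal_exp, hexp1]
          norm_num
        exact_mod_cast h4
      apply hs0
      have h5 : Real.exp s = Real.exp 0 := by rw [hreal, Real.exp_zero]
      exact Real.exp_injective h5
  -- assemble the equality of submodules
  apply le_antisymm
  · apply Submodule.topologicalClosure_minimal
    · rw [Submodule.span_le]
      rintro y ⟨hy0, χ, hχ⟩
      exact hkey y hy0 χ hχ
    · exact Submodule.closed_of_finiteDimensional _
  · have hΩmem : Ω ∈ {y : H | y ≠ 0 ∧ ∃ χ : ℝ → ℂ, ∀ t, D t y = χ t • y} :=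
      ⟨hΩne, fun _ => 1, fun t => by rw [hDΩ, one_smul]⟩
    have h1 : (ℂ ∙ Ω) ≤ Submodule.span ℂ {y : H | y ≠ 0 ∧ ∃ χ : ℝ → ℂ, ∀ t, D t y = χ t • y} := by
      rw [Submodule.span_singleton_le_iff_mem]
      exact Submodule.subset_span hΩmem
    exact h1.trans (Submodule.le_topologicalClosure _)
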